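/- Let 0 ≤ a ≤ b ≤ π. For every t ∈ [b − a, min(a + b, 2π − a − b)] there exists a spherical triangle in the unit 2-sphere with side lengths a, b, t; such a triangle is unique up to isometry of S²; and it is contained in a great circle if and only if t is an endpoint of the interval [b − a, min(a + b, 2π − a − b)]. -/

import Mathlib

open Real Set

/-- Geodesic distance on the unit sphere of `ℝ³`. -/
noncomputable def sphereDist3 (x y : EuclideanSpace ℝ (Fin 3)) : ℝ :=
  Real.arccos (inner ℝ x y)


local notation "E3" => EuclideanSpace ℝ (Fin 3)

/-- Coerce a plain vector into `EuclideanSpace`. -/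
def v3 (p : Fin 3 → ℝ) : E3 := WithLp.toLp 2 p

lemma inner_v3 (p q : Fin 3 → ℝ) :
    (inner ℝ (v3 p) (v3 q) : ℝ) = p 0 * q 0 + p 1 * q 1 + p 2 * q 2 := by
  simp [v3, PiLp.inner_apply, RCLike.inner_apply, Fin.sum_univ_three]
  ring

lemma inner_v3' (v : E3) (q : Fin 3 → ℝ) :
    (inner ℝ v (v3 q) : ℝ) = v 0 * q 0 + v 1 * q 1 + v 2 * q 2 := by
  simp [v3, PiLp.inner_apply, RCLike.inner_apply, Fin.sum_univ_three]
  ring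

noncomputable def xx (a b t : ℝ) : ℝ :=
  if sin a = 0 then 0 else (cos t - cos a * cos b) / sin a

noncomputable def yy (a b t : ℝ) : ℝ := Real.sqrt (sin b ^ 2 - xx a b t ^ 2)

noncomputable def Apt (a b t : ℝ) : E3 := v3 ![xx a b t, yy a b t, cos b]
noncomputable def Bpt (a : ℝ) : E3 := v3 ![sin a, 0, cos a]
noncomputable def Cpt : E3 := v3 ![0, 0, 1]

lemma sin_zero_cases {a : ℝ} (h0 : 0 ≤ a) (ha : a ≤ π) (hsa : sin a = 0) :
    a = 0 ∨ a = π := by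
  rcases eq_or_lt_of_le ha with h | h
  · right; exact h
  · left
    exact (Real.sin_eq_zero_iff_of_lt_of_lt (by linarith [Real.pi_pos]) h).1 hsa

section facts

variable {a b t : ℝ} (h0 : 0 ≤ a) (hab : a ≤ b) (hb : b ≤ π)
variable (ht : t ∈ Set.Icc (b - a) (min (a + b) (2 * π - a - b)))

lemma min_le_pi' : min (a + b) (2 * π - a - b) ≤ π := by
  rcases le_total (a + b) π with h | h
  · exact le_trans (min_le_left _ _) h
  · exact le_trans (min_le_right _ _) (by linarith)

include hab ht in
lemma t_nonneg : 0 ≤ t := le_trans (by linarith) ht.1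

include ht in
lemma t_le_pi : t ≤ π := le_trans ht.2 min_le_pi'

omit h0 hb in
include hab ht in
lemma cos_t_le : cos t ≤ cos (b - a) :=
  Real.cos_le_cos_of_nonneg_of_le_pi (by linarith) (t_le_pi ht) ht.1

omit h0 hb in
include hab ht in
lemma le_cos_t : cos (a + b) ≤ cos t := by
  have h1 : cos (min (a + b) (2 * π - a - b)) ≤ cos t :=
    Real.cos_le_cos_of_nonneg_of_le_pi (t_nonneg hab ht) min_le_pi' ht.2
  rcases min_choice (a + b) (2 * π - a - b) with h | h <;> rw [h] at h1
  · exact h1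
  · rwa [show 2 * π - a - b = 2 * π - (a + b) by ring, Real.cos_two_pi_sub] at h1

include h0 hab hb ht in
lemma xx_mem : -sin b ≤ xx a b t ∧ xx a b t ≤ sin b := by
  have hsb : 0 ≤ sin b := Real.sin_nonneg_of_nonneg_of_le_pi (by linarith) hb
  by_cases hsa : sin a = 0
  · rw [xx, if_pos hsa]
    exact ⟨by linarith, hsb⟩
  · have hsa' : 0 < sin a :=
      lt_of_le_of_ne (Real.sin_nonneg_of_nonneg_of_le_pi h0 (by linarith)) (Ne.symm hsa)
    have h1 := cos_t_le hab ht
    have h2 := le_cos_t hab ht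
    rw [Real.cos_sub] at h1
    rw [Real.cos_add] at h2
    rw [xx, if_neg hsa]
    constructor
    · rw [show -sin b = (-(sin b * sin a)) / sin a by field_simp,
        div_le_div_iff_of_pos_right hsa']
      linarith
    · rw [show sin b = sin b * sin a / sin a by field_simp,
        div_le_div_iff_of_pos_right hsa']
      linarith

include h0 hab hb ht in
lemma xx_sq_le : xx a b t ^ 2 ≤ sin b ^ 2 := by
  obtain ⟨h1, h2⟩ := xx_mem h0 hab hb ht
  exact sq_le_sq' h1 h2

include h0 hab hb ht in
lemma yy_sq : yy a b t ^ 2 = sin b ^ 2 - xx a b t ^ 2 :=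
  Real.sq_sqrt (by linarith [xx_sq_le h0 hab hb ht])

include h0 hab hb ht in
lemma inner_AB : (inner ℝ (Apt a b t) (Bpt a) : ℝ) = cos t := by
  rw [Apt, Bpt, inner_v3]
  simp only [Matrix.cons_val_zero, Matrix.cons_val_one, Matrix.head_cons,
    Matrix.cons_val_two, Matrix.tail_cons]
  by_cases hsa : sin a = 0
  · rw [xx, if_pos hsa]
    rcases sin_zero_cases h0 (by linarith) hsa with rfl | rfl
    · -- a = 0
      have hmin : min (0 + b) (2 * π - 0 - b) = 0 + b := min_eq_left (by linarith)
      have h2 : t ≤ b := by have := ht.2; rw [hmin] at this; linarith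
      have h1 : b ≤ t := by have := ht.1; linarith
      have hts : t = b := le_antisymm h2 h1
      subst hts
      simp
    · -- a = π, hence b = π
      have hbb : b = π := le_antisymm hb hab
      subst hbb
      have hmin : min (π + π) (2 * π - π - π) = 2 * π - π - π :=
        min_eq_right (by linarith [Real.pi_pos])
      have h2 : t ≤ 0 := by have := ht.2; rw [hmin] at this; linarith
      have h1 : 0 ≤ t := by have := ht.1; linarith
      have hts : t = 0 := le_antisymm h2 h1
      subst hts
      simp
  · rw [xx, if_neg hsa]
    field_simp
    ring

lemma inner_AC : (inner ℝ (Apt a b t) Cpt : ℝ) = cos b := by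
  rw [Apt, Cpt, inner_v3]; simp

lemma inner_BC : (inner ℝ (Bpt a) Cpt : ℝ) = cos a := by
  rw [Bpt, Cpt, inner_v3]; simp

lemma norm_Bpt : ‖Bpt a‖ = 1 := by
  have : (inner ℝ (Bpt a) (Bpt a) : ℝ) = 1 := by
    rw [Bpt, inner_v3]
    simp only [Matrix.cons_val_zero, Matrix.cons_val_one, Matrix.head_cons,
      Matrix.cons_val_two, Matrix.tail_cons]
    nlinarith [Real.sin_sq_add_cos_sq a]
  rw [norm_eq_sqrt_real_inner, this, Real.sqrt_one]

lemma norm_Cpt : ‖Cpt‖ = 1 := by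
  have : (inner ℝ Cpt Cpt : ℝ) = 1 := by rw [Cpt, inner_v3]; norm_num [Matrix.cons_val_two, Matrix.tail_cons, Matrix.head_cons]
  rw [norm_eq_sqrt_real_inner, this, Real.sqrt_one]

include h0 hab hb ht in
lemma norm_Apt : ‖Apt a b t‖ = 1 := by
  have hy := yy_sq h0 hab hb ht
  have : (inner ℝ (Apt a b t) (Apt a b t) : ℝ) = 1 := by
    rw [Apt, inner_v3]
    simp only [Matrix.cons_val_zero, Matrix.cons_val_one, Matrix.head_cons,
      Matrix.cons_val_two, Matrix.tail_cons]
    nlinarith [Real.sin_sq_add_cos_sq b]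
  rw [norm_eq_sqrt_real_inner, this, Real.sqrt_one]

end facts

lemma gram_rigid (v w : Fin 3 → E3)
    (h : ∀ i j, (inner ℝ (v i) (v j) : ℝ) = inner ℝ (w i) (w j)) :
    ∃ f : E3 ≃ₗᵢ[ℝ] E3, ∀ i, f (v i) = w i := by
  set φ : (Fin 3 → ℝ) →ₗ[ℝ] E3 := Fintype.linearCombination ℝ v with hφ
  set ψ : (Fin 3 → ℝ) →ₗ[ℝ] E3 := Fintype.linearCombination ℝ w with hψ
  have hinner : ∀ c d : Fin 3 → ℝ, (inner ℝ (φ c) (φ d) : ℝ) = inner ℝ (ψ c) (ψ d) := by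
    intro c d
    simp only [hφ, hψ, Fintype.linearCombination_apply, sum_inner, inner_sum,
      real_inner_smul_left, real_inner_smul_right, h]
  have hker : LinearMap.ker φ = LinearMap.ker ψ := by
    ext c
    simp only [LinearMap.mem_ker]
    rw [← inner_self_eq_zero (𝕜 := ℝ) (x := φ c), ← inner_self_eq_zero (𝕜 := ℝ) (x := ψ c),
      hinner c c]
  let L : LinearMap.range φ ≃ₗ[ℝ] LinearMap.range ψ :=
    φ.quotKerEquivRange.symm.trans
      ((Submodule.quotEquivOfEq _ _ hker).trans ψ.quotKerEquivRange)
  have hL : ∀ c : Fin 3 → ℝ, (L ⟨φ c, LinearMap.mem_range_self φ c⟩ : E3) = ψ c := by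
    intro c
    have h1 : φ.quotKerEquivRange.symm ⟨φ c, LinearMap.mem_range_self φ c⟩
        = Submodule.Quotient.mk c := by
      rw [LinearEquiv.symm_apply_eq]
      exact Subtype.ext rfl
    simp [L, h1, Submodule.quotEquivOfEq_mk]
  have hnorm : ∀ x : LinearMap.range φ, ‖((L x : LinearMap.range ψ) : E3)‖ = ‖(x : E3)‖ := by
    rintro ⟨x, c, rfl⟩
    rw [hL c]
    rw [norm_eq_sqrt_real_inner, norm_eq_sqrt_real_inner, hinner]
  let ℓ : LinearMap.range φ →ₗᵢ[ℝ] E3 :=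
    { toLinearMap := (Submodule.subtype _).comp (L : LinearMap.range φ →ₗ[ℝ] LinearMap.range ψ)
      norm_map' := fun x => hnorm x }
  have hℓ : ∀ x : LinearMap.range φ, ℓ x = ((L x : LinearMap.range ψ) : E3) := fun _ => rfl
  let F := ℓ.extend
  refine ⟨F.toLinearIsometryEquiv rfl, fun i => ?_⟩
  have hv : φ (Pi.single i 1) = v i := by
    simp [hφ, Fintype.linearCombination_apply_single]
  have hmem : v i ∈ LinearMap.range φ := hv ▸ LinearMap.mem_range_self φ _
  have hFv : F (v i) = ℓ ⟨v i, hmem⟩ := ℓ.extend_apply ⟨v i, hmem⟩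
  rw [LinearIsometry.toLinearIsometryEquiv_apply, hFv, hℓ]
  have heq : (⟨v i, hmem⟩ : LinearMap.range φ)
      = ⟨φ (Pi.single i 1), LinearMap.mem_range_self φ _⟩ := Subtype.ext hv.symm
  rw [heq, hL]
  simp [hψ, Fintype.linearCombination_apply_single]

lemma inner_eq_of_sphereDist {X Y X' Y' : E3} (hX : ‖X‖ = 1) (hY : ‖Y‖ = 1)
    (hX' : ‖X'‖ = 1) (hY' : ‖Y'‖ = 1) (h : sphereDist3 X Y = sphereDist3 X' Y') :
    (inner ℝ X Y : ℝ) = inner ℝ X' Y' := by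
  have h1 : |(inner ℝ X Y : ℝ)| ≤ 1 := by
    have := abs_real_inner_le_norm X Y; rwa [hX, hY, one_mul] at this
  have h2 : |(inner ℝ X' Y' : ℝ)| ≤ 1 := by
    have := abs_real_inner_le_norm X' Y'; rwa [hX', hY', one_mul] at this
  rw [abs_le] at h1 h2
  rw [← Real.cos_arccos h1.1 h1.2, ← Real.cos_arccos h2.1 h2.2]
  exact congrArg Real.cos h

/-- Uniqueness part, as a standalone lemma. -/
lemma triangle_unique (A B C A' B' C' : E3)
    (hA : ‖A‖ = 1) (hB : ‖B‖ = 1) (hC : ‖C‖ = 1)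
    (hA' : ‖A'‖ = 1) (hB' : ‖B'‖ = 1) (hC' : ‖C'‖ = 1)
    (d1 : sphereDist3 B C = sphereDist3 B' C')
    (d2 : sphereDist3 A C = sphereDist3 A' C')
    (d3 : sphereDist3 A B = sphereDist3 A' B') :
    ∃ f : E3 ≃ₗᵢ[ℝ] E3, f A = A' ∧ f B = B' ∧ f C = C' := by
  have iBC := inner_eq_of_sphereDist hB hC hB' hC' d1
  have iAC := inner_eq_of_sphereDist hA hC hA' hC' d2
  have iAB := inner_eq_of_sphereDist hA hB hA' hB' d3
  have sAA : (inner ℝ A A : ℝ) = inner ℝ A' A' := by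
    rw [real_inner_self_eq_norm_sq, real_inner_self_eq_norm_sq, hA, hA']
  have sBB : (inner ℝ B B : ℝ) = inner ℝ B' B' := by
    rw [real_inner_self_eq_norm_sq, real_inner_self_eq_norm_sq, hB, hB']
  have sCC : (inner ℝ C C : ℝ) = inner ℝ C' C' := by
    rw [real_inner_self_eq_norm_sq, real_inner_self_eq_norm_sq, hC, hC']
  obtain ⟨f, hf⟩ := gram_rigid ![A, B, C] ![A', B', C'] (by
    intro i j
    fin_cases i <;> fin_cases j
    · exact sAA
    · exact iAB
    · exact iAC
    · calc (inner ℝ B A : ℝ) = inner ℝ A B := real_inner_comm _ _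
        _ = inner ℝ A' B' := iAB
        _ = inner ℝ B' A' := real_inner_comm _ _
    · exact sBB
    · exact iBC
    · calc (inner ℝ C A : ℝ) = inner ℝ A C := real_inner_comm _ _
        _ = inner ℝ A' C' := iAC
        _ = inner ℝ C' A' := real_inner_comm _ _
    · calc (inner ℝ C B : ℝ) = inner ℝ B C := real_inner_comm _ _
        _ = inner ℝ B' C' := iBC
        _ = inner ℝ C' B' := real_inner_comm _ _
    · exact sCC)
  refine ⟨f, ?_, ?_, ?_⟩
  · have := hf 0; simpa using this
  · have := hf 1; simpa using this
  · have := hf 2; simpa using this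

section main

variable {a b t : ℝ} (h0 : 0 ≤ a) (hab : a ≤ b) (hb : b ≤ π)
variable (ht : t ∈ Set.Icc (b - a) (min (a + b) (2 * π - a - b)))

include h0 hab hb ht in
lemma canonical_triangle :
    ‖Apt a b t‖ = 1 ∧ ‖Bpt a‖ = 1 ∧ ‖Cpt‖ = 1 ∧
      sphereDist3 (Bpt a) Cpt = a ∧ sphereDist3 (Apt a b t) Cpt = b ∧
      sphereDist3 (Apt a b t) (Bpt a) = t := by
  refine ⟨norm_Apt h0 hab hb ht, norm_Bpt, norm_Cpt, ?_, ?_, ?_⟩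
  · rw [sphereDist3, inner_BC, Real.arccos_cos h0 (by linarith)]
  · rw [sphereDist3, inner_AC, Real.arccos_cos (by linarith) hb]
  · rw [sphereDist3, inner_AB h0 hab hb ht,
      Real.arccos_cos (t_nonneg hab ht) (t_le_pi ht)]

include h0 hab hb ht in
lemma degenerate_iff (A B C : E3)
    (hA : ‖A‖ = 1) (hB : ‖B‖ = 1) (hC : ‖C‖ = 1)
    (dBC : sphereDist3 B C = a) (dAC : sphereDist3 A C = b) (dAB : sphereDist3 A B = t) :
    (∃ v : E3, v ≠ 0 ∧
        (inner ℝ v A : ℝ) = 0 ∧ (inner ℝ v B : ℝ) = 0 ∧ (inner ℝ v C : ℝ) = 0) ↔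
      (t = b - a ∨ t = min (a + b) (2 * π - a - b)) := by
  obtain ⟨nA, nB, nC, e1, e2, e3⟩ := canonical_triangle h0 hab hb ht
  obtain ⟨f, hfA, hfB, hfC⟩ := triangle_unique A B C (Apt a b t) (Bpt a) Cpt
    hA hB hC nA nB nC (by rw [dBC, e1]) (by rw [dAC, e2]) (by rw [dAB, e3])
  have hsb : 0 ≤ sin b := Real.sin_nonneg_of_nonneg_of_le_pi (by linarith) hb
  have step : (∃ v : E3, v ≠ 0 ∧
      (inner ℝ v A : ℝ) = 0 ∧ (inner ℝ v B : ℝ) = 0 ∧ (inner ℝ v C : ℝ) = 0) ↔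
      (∃ v : E3, v ≠ 0 ∧ (inner ℝ v (Apt a b t) : ℝ) = 0 ∧
        (inner ℝ v (Bpt a) : ℝ) = 0 ∧ (inner ℝ v Cpt : ℝ) = 0) := by
    constructor
    · rintro ⟨v, hv, h1, h2, h3⟩
      refine ⟨f v, fun hz => hv (by simpa using congrArg f.symm hz), ?_, ?_, ?_⟩
      · rw [← hfA, f.inner_map_map]; exact h1
      · rw [← hfB, f.inner_map_map]; exact h2
      · rw [← hfC, f.inner_map_map]; exact h3
    · rintro ⟨v, hv, h1, h2, h3⟩
      refine ⟨f.symm v, fun hz => hv (by simpa using congrArg f hz), ?_, ?_, ?_⟩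
      · rw [← f.inner_map_map (f.symm v) A, f.apply_symm_apply, hfA]; exact h1
      · rw [← f.inner_map_map (f.symm v) B, f.apply_symm_apply, hfB]; exact h2
      · rw [← f.inner_map_map (f.symm v) C, f.apply_symm_apply, hfC]; exact h3
  rw [step]
  constructor
  · -- degenerate canonical triangle forces endpoint
    rintro ⟨v, hv, h1, h2, h3⟩
    by_contra hcon
    push_neg at hcon
    obtain ⟨hne1, hne2⟩ := hcon
    have hsa : sin a ≠ 0 := by
      intro hsa
      rcases sin_zero_cases h0 (by linarith) hsa with rfl | rfl
      · apply hne1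
        have hmin : min (0 + b) (2 * π - 0 - b) = 0 + b := min_eq_left (by linarith)
        have := ht.2; rw [hmin] at this
        have := ht.1
        linarith [ht.1]
      · have hbb : b = π := le_antisymm hb hab
        subst hbb
        apply hne1
        have hmin : min (π + π) (2 * π - π - π) = 2 * π - π - π :=
          min_eq_right (by linarith [Real.pi_pos])
        have := ht.2; rw [hmin] at this
        have := ht.1
        linarith
    have hsa' : 0 < sin a :=
      lt_of_le_of_ne (Real.sin_nonneg_of_nonneg_of_le_pi h0 (by linarith)) (Ne.symm hsa)
    -- strict inequalities
    have hlt1 : b - a < t := lt_of_le_of_ne ht.1 (fun h => hne1 h.symm)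
    have hlt2 : t < min (a + b) (2 * π - a - b) := lt_of_le_of_ne ht.2 hne2
    have hc1 : cos t < cos (b - a) :=
      Real.cos_lt_cos_of_nonneg_of_le_pi (by linarith) (t_le_pi ht) hlt1
    have hc2 : cos (a + b) < cos t := by
      have := Real.cos_lt_cos_of_nonneg_of_le_pi (t_nonneg hab ht) min_le_pi' hlt2
      rcases min_choice (a + b) (2 * π - a - b) with h | h <;> rw [h] at this
      · exact this
      · rwa [show 2 * π - a - b = 2 * π - (a + b) by ring, Real.cos_two_pi_sub] at this
    rw [Real.cos_sub] at hc1
    rw [Real.cos_add] at hc2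
    have hxval : xx a b t = (cos t - cos a * cos b) / sin a := if_neg hsa
    have hxlt : xx a b t < sin b := by
      rw [hxval, div_lt_iff₀ hsa']
      nlinarith
    have hxgt : -sin b < xx a b t := by
      rw [hxval, lt_div_iff₀ hsa']
      nlinarith
    have hyy : 0 < yy a b t := by
      apply Real.sqrt_pos.2
      nlinarith
    -- unpack the orthogonality relations
    have g3 := (inner_v3' v ![0,0,1]).symm.trans h3
    have g2 := (inner_v3' v ![sin a, 0, cos a]).symm.trans h2
    have g1 := (inner_v3' v ![xx a b t, yy a b t, cos b]).symm.trans h1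
    simp only [Matrix.cons_val_zero, Matrix.cons_val_one, Matrix.head_cons,
      Matrix.cons_val_two, Matrix.tail_cons, mul_zero, mul_one, zero_add, add_zero] at g1 g2 g3
    have hv2 : v 2 = 0 := g3
    have hv0 : v 0 = 0 := by
      have : v 0 * sin a = 0 := by rw [hv2] at g2; linarith
      rcases mul_eq_zero.1 this with h | h
      · exact h
      · exact absurd h hsa
    have hv1 : v 1 = 0 := by
      have : v 1 * yy a b t = 0 := by rw [hv0, hv2] at g1; linarith
      rcases mul_eq_zero.1 this with h | h
      · exact h
      · exact absurd h (ne_of_gt hyy)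
    exact hv (by ext i; fin_cases i <;> simp [hv0, hv1, hv2])
  · -- endpoint implies degenerate
    intro hend
    by_cases hsa : sin a = 0
    · refine ⟨v3 ![1, 0, 0], ?_, ?_, ?_, ?_⟩
      · intro hz
        have : (inner ℝ (v3 ![1,0,0]) (v3 ![1,0,0]) : ℝ) = 1 := by rw [inner_v3]; norm_num [Matrix.cons_val_two, Matrix.tail_cons, Matrix.head_cons]
        rw [hz, inner_zero_left] at this
        norm_num at this
      · show (inner ℝ (v3 ![1,0,0]) (v3 ![xx a b t, yy a b t, cos b]) : ℝ) = 0
        rw [inner_v3]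
        simp [xx, hsa]
      · show (inner ℝ (v3 ![1,0,0]) (v3 ![sin a, 0, cos a]) : ℝ) = 0
        rw [inner_v3]
        simp [hsa]
      · show (inner ℝ (v3 ![1,0,0]) (v3 ![0, 0, 1]) : ℝ) = 0
        rw [inner_v3]
        simp
    · have hy0 : yy a b t = 0 := by
        have hxval : xx a b t = (cos t - cos a * cos b) / sin a := if_neg hsa
        have hxsq : xx a b t ^ 2 = sin b ^ 2 := by
          rcases hend with h | h
          · have : cos t = cos b * cos a + sin b * sin a := by rw [h, Real.cos_sub]
            rw [hxval, this]
            field_simp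
            ring
          · have hct : cos t = cos (a + b) := by
              rcases min_choice (a + b) (2 * π - a - b) with hm | hm <;> rw [hm] at h
              · rw [h]
              · rw [h, show 2 * π - a - b = 2 * π - (a + b) by ring, Real.cos_two_pi_sub]
            rw [hxval, hct, Real.cos_add]
            field_simp
            ring
        rw [yy, hxsq, sub_self, Real.sqrt_zero]
      refine ⟨v3 ![0, 1, 0], ?_, ?_, ?_, ?_⟩
      · intro hz
        have : (inner ℝ (v3 ![0,1,0]) (v3 ![0,1,0]) : ℝ) = 1 := by rw [inner_v3]; norm_num [Matrix.cons_val_two, Matrix.tail_cons, Matrix.head_cons]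
        rw [hz, inner_zero_left] at this
        norm_num at this
      · show (inner ℝ (v3 ![0,1,0]) (v3 ![xx a b t, yy a b t, cos b]) : ℝ) = 0
        rw [inner_v3]
        simp [hy0]
      · show (inner ℝ (v3 ![0,1,0]) (v3 ![sin a, 0, cos a]) : ℝ) = 0
        rw [inner_v3]
        simp
      · show (inner ℝ (v3 ![0,1,0]) (v3 ![0, 0, 1]) : ℝ) = 0
        rw [inner_v3]
        simp

end main


/-- Existence and uniqueness of spherical triangles: for `0 ≤ a ≤ b ≤ π` and every
`t ∈ [b−a, min (a+b) (2π−a−b)]` there is a spherical triangle in `S²` with side lengths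
`a, b, t`; it is unique up to isometry of `S²`; and it lies on a great circle iff `t` is an
endpoint of the interval. -/
theorem spherical_triangle_existence_uniqueness (a b : ℝ)
    (h0 : 0 ≤ a) (hab : a ≤ b) (hb : b ≤ π) :
    (∀ t ∈ Set.Icc (b - a) (min (a + b) (2 * π - a - b)),
      ∃ A B C : EuclideanSpace ℝ (Fin 3), ‖A‖ = 1 ∧ ‖B‖ = 1 ∧ ‖C‖ = 1 ∧
        sphereDist3 B C = a ∧ sphereDist3 A C = b ∧ sphereDist3 A B = t) ∧
    (∀ t ∈ Set.Icc (b - a) (min (a + b) (2 * π - a - b)),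
      ∀ A B C A' B' C' : EuclideanSpace ℝ (Fin 3),
        ‖A‖ = 1 → ‖B‖ = 1 → ‖C‖ = 1 → ‖A'‖ = 1 → ‖B'‖ = 1 → ‖C'‖ = 1 →
        sphereDist3 B C = a → sphereDist3 A C = b → sphereDist3 A B = t →
        sphereDist3 B' C' = a → sphereDist3 A' C' = b → sphereDist3 A' B' = t →
        ∃ f : EuclideanSpace ℝ (Fin 3) ≃ₗᵢ[ℝ] EuclideanSpace ℝ (Fin 3),
          f A = A' ∧ f B = B' ∧ f C = C') ∧
    (∀ t ∈ Set.Icc (b - a) (min (a + b) (2 * π - a - b)),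
      ∀ A B C : EuclideanSpace ℝ (Fin 3),
        ‖A‖ = 1 → ‖B‖ = 1 → ‖C‖ = 1 →
        sphereDist3 B C = a → sphereDist3 A C = b → sphereDist3 A B = t →
        ((∃ v : EuclideanSpace ℝ (Fin 3), v ≠ 0 ∧
            (inner ℝ v A : ℝ) = 0 ∧ (inner ℝ v B : ℝ) = 0 ∧ (inner ℝ v C : ℝ) = 0) ↔
          (t = b - a ∨ t = min (a + b) (2 * π - a - b)))) := by
  refine ⟨?_, ?_, ?_⟩
  · intro t ht
    obtain ⟨nA, nB, nC, e1, e2, e3⟩ := canonical_triangle h0 hab hb ht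
    exact ⟨Apt a b t, Bpt a, Cpt, nA, nB, nC, e1, e2, e3⟩
  · intro t ht A B C A' B' C' hA hB hC hA' hB' hC' d1 d2 d3 d1' d2' d3'
    exact triangle_unique A B C A' B' C' hA hB hC hA' hB' hC'
      (by rw [d1, d1']) (by rw [d2, d2']) (by rw [d3, d3'])
  · intro t ht A B C hA hB hC d1 d2 d3
    exact degenerate_iff h0 hab hb ht A B C hA hB hC d1 d2 d3
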